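/- The f-vector of Δ_{12,33} is (1,12,45,66,33): Δ_{12,33} has exactly 12 one-element faces, exactly 45 two-element faces, exactly 66 three-element faces, exactly 33 four-element faces, no faces of cardinality greater than 4, and every face of Δ_{12,33} is contained in a four-element face (Δ_{12,33} is pure of dimension 3). -/

import Mathlib

namespace Delta

abbrev V : Type := Fin 12

def x1 : V := 0
def x2 : V := 1
def x3 : V := 2
def y1 : V := 3
def y2 : V := 4
def y3 : V := 5
def z1 : V := 6
def z2 : V := 7
def z3 : V := 8
def v1 : V := 9
def v2 : V := 10
def v3 : V := 11

/-- The 33 facets of `Δ_{12,33}`, in the order they are listed. -/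
def facetList : List (Finset V) :=
  [{x1,y2,y3,z1}, {y2,y3,z1,v2}, {y1,y2,y3,v2}, {y1,y2,z3,v2}, {y2,z1,z3,v2},
   {x3,y2,z1,z3}, {x1,x3,y2,z1}, {x1,x3,z1,v3}, {x3,y1,y2,z3}, {z1,z2,z3,v2},
   {x3,y1,y2,v1}, {x2,x3,y1,v1}, {x3,z1,z3,v3}, {z1,z2,z3,v3}, {x1,z1,z2,v3},
   {x1,y3,z1,z2}, {y3,z1,z2,v2}, {y1,y3,z2,v2}, {x1,x3,y2,v1}, {x1,x2,x3,v1},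
   {x1,y2,y3,v1}, {x2,x3,y1,z3}, {x2,x3,z3,v3}, {y1,z2,z3,v2}, {x2,y1,z2,z3},
   {x2,y1,y3,z2}, {y1,y2,y3,v1}, {x2,y1,y3,v1}, {x1,x2,y3,v1}, {x1,x2,y3,z2},
   {x1,x2,x3,v3}, {x1,x2,z2,v3}, {x2,z2,z3,v3}]

/-- The facets of `Δ_{12,33}` as a finite set. -/
def facets : Finset (Finset V) := facetList.toFinset

/-- `F` is a face of `Δ_{12,33}` iff it is a subset of one of the 33 facets. -/
def IsFace (F : Finset V) : Prop := ∃ G ∈ facets, F ⊆ G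

instance : DecidablePred IsFace := fun F =>
  inferInstanceAs (Decidable (∃ G ∈ facets, F ⊆ G))

lemma map_card_facetList : facetList.map Finset.card = List.replicate 33 4 := by decide

lemma facets_card : ∀ G ∈ facets, G.card = 4 := by
  intro G hG
  rw [facets, List.mem_toFinset] at hG
  have h := List.mem_map_of_mem (f := Finset.card) hG
  rw [map_card_facetList] at h
  exact List.eq_of_mem_replicate h

lemma filter_eq (k : ℕ) :
    ((Finset.univ : Finset V).powerset.filter (fun F => IsFace F ∧ F.card = k)) =
      facets.biUnion (fun G => G.powersetCard k) := by
  ext F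
  rw [Finset.mem_filter]
  simp only [Finset.mem_filter, Finset.mem_powerset, Finset.mem_biUnion,
    Finset.mem_powersetCard, IsFace]
  constructor
  · rintro ⟨-, ⟨G, hG, hsub⟩, hcard⟩
    exact ⟨G, hG, hsub, hcard⟩
  · rintro ⟨G, hG, hsub, hcard⟩
    exact ⟨Finset.subset_univ F, ⟨G, hG, hsub⟩, hcard⟩

set_option maxRecDepth 40000 in
lemma c1 : (facets.biUnion (fun G => G.powersetCard 1)).card = 12 := by decide
set_option maxRecDepth 40000 in
lemma c2 : (facets.biUnion (fun G => G.powersetCard 2)).card = 45 := by decide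
set_option maxRecDepth 40000 in
lemma c3 : (facets.biUnion (fun G => G.powersetCard 3)).card = 66 := by decide
set_option maxRecDepth 40000 in
lemma c4 : (facets.biUnion (fun G => G.powersetCard 4)).card = 33 := by decide

/-- the f-vector of `Δ_{12,33}` is `(1,12,45,66,33)`, all faces have
cardinality at most 4, and every face is contained in a 4-element face. -/
theorem delta_f_vector :
    ((Finset.univ : Finset V).powerset.filter (fun F => IsFace F ∧ F.card = 1)).card = 12 ∧
    ((Finset.univ : Finset V).powerset.filter (fun F => IsFace F ∧ F.card = 2)).card = 45 ∧
    ((Finset.univ : Finset V).powerset.filter (fun F => IsFace F ∧ F.card = 3)).card = 66 ∧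
    ((Finset.univ : Finset V).powerset.filter (fun F => IsFace F ∧ F.card = 4)).card = 33 ∧
    (∀ F : Finset V, IsFace F → F.card ≤ 4) ∧
    (∀ F : Finset V, IsFace F → ∃ G : Finset V, IsFace G ∧ G.card = 4 ∧ F ⊆ G) := by
  refine ⟨by rw [filter_eq]; exact c1, by rw [filter_eq]; exact c2,
    by rw [filter_eq]; exact c3, by rw [filter_eq]; exact c4, ?_, ?_⟩
  · rintro F ⟨G, hG, hsub⟩
    calc F.card ≤ G.card := Finset.card_le_card hsub
    _ = 4 := facets_card G hG
  · rintro F ⟨G, hG, hsub⟩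
    exact ⟨G, ⟨G, hG, subset_refl G⟩, facets_card G hG, hsub⟩

end Delta
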